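/- Let X_1, …, X_n be i.i.d. random variables with X_i ∈ [0, M] almost surely and mean μ = E[X_1], and let X̄ = (1/n)Σ X_i. Given δ > 0, ε ∈ (0,1), and p_f ∈ (0,1), if n ≥ max{6e/ε², 1/ln 2}·ln(2/p_f)·(M/δ), then P(|X̄ − μ| > max{ε·μ, δ}) ≤ p_f. -/

import Mathlib

set_option maxHeartbeats 1000000


open MeasureTheory ProbabilityTheory

lemma MC_chord (x : ℝ) (h0 : 0 ≤ x) (h1 : x ≤ 1) : x * Real.log 2 ≤ Real.log (1+x) := by
  have hc := strictConcaveOn_log_Ioi.concaveOn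
  have h2 := hc.2 (Set.mem_Ioi.mpr one_pos) (Set.mem_Ioi.mpr (by norm_num : (0:ℝ) < 2))
    (show (0:ℝ) ≤ 1 - x by linarith) h0 (by ring)
  simp only [smul_eq_mul, Real.log_one, mul_zero] at h2
  have heq : (1 - x) * 1 + x * 2 = 1 + x := by ring
  rw [heq] at h2
  linarith

lemma MC_ineq1 (x : ℝ) (h0 : 0 ≤ x) (h1 : x ≤ 1) :
    x ^ 2 / 3 ≤ (1 + x) * Real.log (1 + x) - x := by
  set f : ℝ → ℝ := fun y => (1 + y) * Real.log (1 + y) - y - y ^ 2 / 3 with hf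
  have key : ∀ y ∈ Set.Icc (0:ℝ) 1, HasDerivAt f (Real.log (1 + y) - 2 * y / 3) y := by
    intro y hy
    have hy1 : (1:ℝ) + y ≠ 0 := by have := hy.1; linarith
    have hd1 : HasDerivAt (fun z : ℝ => 1 + z) 1 y := by
      simpa using (hasDerivAt_id y).const_add (1:ℝ)
    have hlog : HasDerivAt (fun z : ℝ => Real.log (1 + z)) (1 / (1 + y)) y := by
      simpa [one_div] using (hd1.log hy1)
    have hmul := hd1.mul hlog
    have hp : HasDerivAt (fun z : ℝ => z ^ 2 / 3) (2 * y / 3) y := by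
      simpa [mul_comm] using (hasDerivAt_pow 2 y).div_const 3
    have hfin := (hmul.sub (hasDerivAt_id y)).sub hp
    exact hfin.congr_deriv (by rw [mul_one_div_cancel hy1]; ring)
  have hmono : MonotoneOn f (Set.Icc (0:ℝ) 1) := by
    apply monotoneOn_of_deriv_nonneg (convex_Icc 0 1)
    · exact ContinuousOn.congr (continuousOn_of_forall_continuousAt
        (fun y hy => (key y hy).continuousAt)) (fun y hy => rfl)
    · intro y hy
      rw [interior_Icc] at hy
      exact (key y (Set.mem_Icc_of_Ioo hy)).differentiableAt.differentiableWithinAt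
    · intro y hy
      rw [interior_Icc] at hy
      rw [(key y (Set.mem_Icc_of_Ioo hy)).deriv]
      have hch := MC_chord y hy.1.le hy.2.le
      have hl2 : (0.6931471803 : ℝ) < Real.log 2 := Real.log_two_gt_d9
      nlinarith [hy.1.le]
  have hm := hmono (Set.left_mem_Icc.mpr zero_le_one) (Set.mem_Icc.mpr ⟨h0, h1⟩) h0
  simp only [hf, Real.log_one] at hm
  norm_num at hm
  linarith

lemma MC_ineq2 (x : ℝ) (h0 : 0 ≤ x) (h1 : x < 1) :
    x ^ 2 / 3 ≤ x + (1 - x) * Real.log (1 - x) := by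
  set f : ℝ → ℝ := fun y => y + (1 - y) * Real.log (1 - y) - y ^ 2 / 3 with hf
  have key : ∀ y ∈ Set.Ico (0:ℝ) 1, HasDerivAt f (-Real.log (1 - y) - 2 * y / 3) y := by
    intro y hy
    have hy1 : (1:ℝ) - y ≠ 0 := by have := hy.2; intro h; linarith
    have hd1 : HasDerivAt (fun z : ℝ => 1 - z) (-1) y := by
      simpa using (hasDerivAt_id y).const_sub (1:ℝ)
    have hlog : HasDerivAt (fun z : ℝ => Real.log (1 - z)) (-1 / (1 - y)) y := by
      simpa using (hd1.log hy1)
    have hmul := hd1.mul hlog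
    have hp : HasDerivAt (fun z : ℝ => z ^ 2 / 3) (2 * y / 3) y := by
      simpa [mul_comm] using (hasDerivAt_pow 2 y).div_const 3
    have hfin := ((hasDerivAt_id y).add hmul).sub hp
    exact hfin.congr_deriv (by rw [mul_div_assoc', mul_neg_one, neg_div, div_self hy1]; ring)
  have hmono : MonotoneOn f (Set.Ico (0:ℝ) 1) := by
    apply monotoneOn_of_deriv_nonneg (convex_Ico 0 1)
    · exact ContinuousOn.congr (continuousOn_of_forall_continuousAt
        (fun y hy => (key y hy).continuousAt)) (fun y hy => rfl)
    · intro y hy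
      rw [interior_Ico] at hy
      exact (key y (Set.mem_Ico.mpr ⟨hy.1.le, hy.2⟩)).differentiableAt.differentiableWithinAt
    · intro y hy
      rw [interior_Ico] at hy
      rw [(key y (Set.mem_Ico.mpr ⟨hy.1.le, hy.2⟩)).deriv]
      have hlog_le : Real.log (1 - y) ≤ -y := by
        have := Real.log_le_sub_one_of_pos (show (0:ℝ) < 1 - y by linarith [hy.2])
        linarith
      linarith [hy.1.le]
  have hm := hmono (Set.mem_Ico.mpr ⟨le_refl 0, one_pos⟩) (Set.mem_Ico.mpr ⟨h0, h1⟩) h0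
  simp only [hf, Real.log_one] at hm
  norm_num at hm
  linarith

section MCaux
variable {Ω : Type*} [MeasureSpace Ω] [IsProbabilityMeasure (ℙ : Measure Ω)]
    {n : ℕ} {X : Fin n → Ω → ℝ} {M : ℝ}

lemma MC_int_exp (Y : Ω → ℝ) (hY : Measurable Y) (hM : 0 < M)
    (hb : ∀ᵐ ω ∂ℙ, Y ω ∈ Set.Icc (0 : ℝ) M) (s : ℝ) :
    Integrable (fun ω => Real.exp (s * Y ω)) ℙ := by
  refine (integrable_const (max 1 (Real.exp (s * M)))).mono'
    ((hY.const_mul s).exp.aestronglyMeasurable) ?_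
  filter_upwards [hb] with ω hω
  rw [Real.norm_eq_abs, abs_of_pos (Real.exp_pos _)]
  rcases le_or_gt s 0 with hs | hs
  · exact le_max_of_le_left (Real.exp_le_one_iff.mpr (mul_nonpos_of_nonpos_of_nonneg hs hω.1))
  · exact le_max_of_le_right (Real.exp_le_exp.mpr (mul_le_mul_of_nonneg_left hω.2 hs.le))

lemma MC_int_Y (Y : Ω → ℝ) (hY : Measurable Y)
    (hb : ∀ᵐ ω ∂ℙ, Y ω ∈ Set.Icc (0 : ℝ) M) :
    Integrable Y ℙ := by
  refine (integrable_const M).mono' hY.aestronglyMeasurable ?_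
  filter_upwards [hb] with ω hω
  rw [Real.norm_eq_abs, abs_of_nonneg hω.1]; exact hω.2

lemma MC_mgf_le (Y : Ω → ℝ) (hY : Measurable Y) (hM : 0 < M)
    (hb : ∀ᵐ ω ∂ℙ, Y ω ∈ Set.Icc (0 : ℝ) M) (s : ℝ) :
    mgf Y ℙ s ≤ Real.exp ((Real.exp (s * M) - 1) * (∫ ω, Y ω ∂ℙ) / M) := by
  have hint := MC_int_exp Y hY hM hb s
  have hintY := MC_int_Y Y hY hb
  have hpt : ∀ᵐ ω ∂ℙ, Real.exp (s * Y ω) ≤ 1 + (Real.exp (s * M) - 1) * Y ω / M := by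
    filter_upwards [hb] with ω hω
    have hcvx := convexOn_exp.2 (Set.mem_univ (0:ℝ)) (Set.mem_univ (s * M))
      (show (0:ℝ) ≤ 1 - Y ω / M by
        rw [sub_nonneg]; exact div_le_one_of_le₀ hω.2 hM.le)
      (show (0:ℝ) ≤ Y ω / M from div_nonneg hω.1 hM.le) (by ring)
    simp only [smul_eq_mul, mul_zero, zero_add, Real.exp_zero, mul_one] at hcvx
    have heq : Y ω / M * (s * M) = s * Y ω := by field_simp
    rw [heq] at hcvx
    calc Real.exp (s * Y ω) ≤ 1 - Y ω / M + Y ω / M * Real.exp (s * M) := hcvx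
      _ = 1 + (Real.exp (s * M) - 1) * Y ω / M := by ring
  have h1 : mgf Y ℙ s ≤ ∫ ω, (1 + (Real.exp (s * M) - 1) * Y ω / M) ∂ℙ := by
    refine integral_mono_ae hint ?_ hpt
    exact (integrable_const 1).add ((hintY.const_mul _).div_const M)
  have h2 : ∫ ω, (1 + (Real.exp (s * M) - 1) * Y ω / M) ∂ℙ
      = 1 + (Real.exp (s * M) - 1) * (∫ ω, Y ω ∂ℙ) / M := by
    rw [integral_add (integrable_const 1) ((hintY.const_mul _).div_const M),
      integral_const, integral_div, integral_const_mul]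
    simp
  rw [h2] at h1
  exact h1.trans (by linarith [Real.add_one_le_exp ((Real.exp (s * M) - 1) * (∫ ω, Y ω ∂ℙ) / M)])

lemma MC_mgf_sum_le (hmeas : ∀ i, Measurable (X i))
    (hindep : iIndepFun X ℙ) (hM : 0 < M)
    (hbdd : ∀ i, ∀ᵐ ω ∂ℙ, X i ω ∈ Set.Icc (0 : ℝ) M)
    {μ : ℝ} (hμi : ∀ i, ∫ ω, X i ω ∂ℙ = μ) (s : ℝ) :
    mgf (∑ i, X i) ℙ s ≤ Real.exp ((n : ℝ) * ((Real.exp (s * M) - 1) * μ / M)) := by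
  rw [hindep.mgf_sum hmeas Finset.univ]
  have hle : ∀ i ∈ Finset.univ, mgf (X i) ℙ s
      ≤ Real.exp ((Real.exp (s * M) - 1) * μ / M) := by
    intro i _
    have := MC_mgf_le (X i) (hmeas i) hM (hbdd i) s
    rwa [hμi i] at this
  calc ∏ i, mgf (X i) ℙ s ≤ ∏ _i : Fin n, Real.exp ((Real.exp (s * M) - 1) * μ / M) :=
        Finset.prod_le_prod (fun i _ => mgf_nonneg) hle
    _ = Real.exp ((n : ℝ) * ((Real.exp (s * M) - 1) * μ / M)) := by
        rw [Finset.prod_const, Finset.card_univ, Fintype.card_fin, ← Real.exp_nat_mul]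

lemma MC_tail_upper (hmeas : ∀ i, Measurable (X i))
    (hindep : iIndepFun X ℙ) (hM : 0 < M)
    (hbdd : ∀ i, ∀ᵐ ω ∂ℙ, X i ω ∈ Set.Icc (0 : ℝ) M)
    {μ : ℝ} (hμi : ∀ i, ∫ ω, X i ω ∂ℙ = μ) {s : ℝ} (hs : 0 ≤ s) (A : ℝ) :
    (ℙ {ω | A ≤ ∑ i, X i ω}).toReal
      ≤ Real.exp (-s * A + (n : ℝ) * ((Real.exp (s * M) - 1) * μ / M)) := by
  have hint : Integrable (fun ω => Real.exp (s * (∑ i, X i) ω)) ℙ :=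
    hindep.integrable_exp_mul_sum hmeas (fun i _ => MC_int_exp (X i) (hmeas i) hM (hbdd i) s)
  have h := measure_ge_le_exp_mul_mgf (X := ∑ i, X i) A hs hint
  have hset : {ω | A ≤ (∑ i, X i) ω} = {ω | A ≤ ∑ i, X i ω} := by
    ext ω; simp [Finset.sum_apply]
  rw [hset] at h
  refine h.trans ?_
  rw [Real.exp_add]
  exact mul_le_mul_of_nonneg_left
    (MC_mgf_sum_le hmeas hindep hM hbdd hμi s) (Real.exp_pos _).le

lemma MC_tail_lower (hmeas : ∀ i, Measurable (X i))
    (hindep : iIndepFun X ℙ) (hM : 0 < M)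
    (hbdd : ∀ i, ∀ᵐ ω ∂ℙ, X i ω ∈ Set.Icc (0 : ℝ) M)
    {μ : ℝ} (hμi : ∀ i, ∫ ω, X i ω ∂ℙ = μ) {s : ℝ} (hs : s ≤ 0) (B : ℝ) :
    (ℙ {ω | ∑ i, X i ω ≤ B}).toReal
      ≤ Real.exp (-s * B + (n : ℝ) * ((Real.exp (s * M) - 1) * μ / M)) := by
  have hint : Integrable (fun ω => Real.exp (s * (∑ i, X i) ω)) ℙ :=
    hindep.integrable_exp_mul_sum hmeas (fun i _ => MC_int_exp (X i) (hmeas i) hM (hbdd i) s)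
  have h := measure_le_le_exp_mul_mgf (X := ∑ i, X i) B hs hint
  have hset : {ω | (∑ i, X i) ω ≤ B} = {ω | ∑ i, X i ω ≤ B} := by
    ext ω; simp [Finset.sum_apply]
  rw [hset] at h
  refine h.trans ?_
  rw [Real.exp_add]
  exact mul_le_mul_of_nonneg_left
    (MC_mgf_sum_le hmeas hindep hM hbdd hμi s) (Real.exp_pos _).le

end MCaux

/-- Accuracy of the Monte Carlo stage (single-length version): for i.i.d. X_i ∈ [0,M]
    with mean μ and sample mean X̄, if n ≥ max{6e/ε², 1/ln 2}·ln(2/p_f)·(M/δ) then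
    P(|X̄ − μ| > max{ε·μ, δ}) ≤ p_f. -/
theorem monte_carlo_accuracy {Ω : Type*} [MeasureSpace Ω]
    [IsProbabilityMeasure (ℙ : Measure Ω)] (n : ℕ) (hn : 0 < n) (X : Fin n → Ω → ℝ)
    (hmeas : ∀ i, Measurable (X i))
    (hindep : iIndepFun X ℙ)
    (hident : ∀ i j, IdentDistrib (X i) (X j) ℙ ℙ)
    (M : ℝ) (hM : 0 < M)
    (hbdd : ∀ i, ∀ᵐ ω ∂ℙ, X i ω ∈ Set.Icc (0 : ℝ) M)
    (μ : ℝ) (hμ : μ = ∫ ω, X ⟨0, hn⟩ ω ∂ℙ)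
    (δ ε pf : ℝ) (hδ : 0 < δ) (hε : ε ∈ Set.Ioo (0 : ℝ) 1) (hpf : pf ∈ Set.Ioo (0 : ℝ) 1)
    (hnlarge : max (6 * Real.exp 1 / ε ^ 2) (1 / Real.log 2) *
        Real.log (2 / pf) * (M / δ) ≤ (n : ℝ)) :
    (ℙ {ω | max (ε * μ) δ < |(1 / (n : ℝ)) * (∑ i, X i ω) - μ|}).toReal ≤ pf := by
  obtain ⟨hε0, hε1⟩ := hε
  obtain ⟨hpf0, hpf1⟩ := hpf
  have npos : (0 : ℝ) < n := Nat.cast_pos.mpr hn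
  set L := Real.log (2 / pf) with hLdef
  have hL : 0 < L := Real.log_pos (by rw [lt_div_iff₀ hpf0]; linarith)
  have hl2 : (0.6931471803 : ℝ) < Real.log 2 := Real.log_two_gt_d9
  have he1 : (2.7182818283 : ℝ) < Real.exp 1 := Real.exp_one_gt_d9
  have hexpL : Real.exp (-L) = pf / 2 := by
    rw [Real.exp_neg, Real.exp_log (by positivity), inv_div]
  -- mean facts
  have hμi : ∀ i, ∫ ω, X i ω ∂ℙ = μ := by
    intro i; rw [hμ]; exact (hident i ⟨0, hn⟩).integral_eq
  have hμ0 : 0 ≤ μ := by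
    rw [hμ]
    exact integral_nonneg_of_ae (by filter_upwards [hbdd ⟨0, hn⟩] with ω hω using hω.1)
  -- size hypotheses, massaged
  have hA : 6 * Real.exp 1 * L * M ≤ (n : ℝ) * (ε ^ 2 * δ) := by
    have h1 : 6 * Real.exp 1 / ε ^ 2 * L * (M / δ) ≤ (n : ℝ) := by
      refine le_trans ?_ hnlarge
      exact mul_le_mul_of_nonneg_right
        (mul_le_mul_of_nonneg_right (le_max_left _ _) hL.le) (by positivity)
    calc 6 * Real.exp 1 * L * M = 6 * Real.exp 1 / ε ^ 2 * L * (M / δ) * (ε ^ 2 * δ) := by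
          field_simp
      _ ≤ (n : ℝ) * (ε ^ 2 * δ) := by
          have : (0:ℝ) ≤ ε ^ 2 * δ := by positivity
          exact mul_le_mul_of_nonneg_right h1 this
  have hB : L * M ≤ (n : ℝ) * (Real.log 2 * δ) := by
    have h1 : 1 / Real.log 2 * L * (M / δ) ≤ (n : ℝ) := by
      refine le_trans ?_ hnlarge
      exact mul_le_mul_of_nonneg_right
        (mul_le_mul_of_nonneg_right (le_max_right _ _) hL.le) (by positivity)
    have hlog2 : (0:ℝ) < Real.log 2 := by linarith
    calc L * M = 1 / Real.log 2 * L * (M / δ) * (Real.log 2 * δ) := by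
          field_simp
      _ ≤ (n : ℝ) * (Real.log 2 * δ) := by
          have : (0:ℝ) ≤ Real.log 2 * δ := by positivity
          exact mul_le_mul_of_nonneg_right h1 this
  -- event decomposition
  set t := max (ε * μ) δ with htdef
  have ht : δ ≤ t := le_max_right _ _
  have htεμ : ε * μ ≤ t := le_max_left _ _
  set Eu : Set Ω := {ω | (n : ℝ) * (μ + t) ≤ ∑ i, X i ω} with hEu
  set El : Set Ω := {ω | ∑ i, X i ω ≤ (n : ℝ) * (μ - t)} with hEl
  have hsub : {ω | t < |(1 / (n : ℝ)) * (∑ i, X i ω) - μ|} ⊆ Eu ∪ El := by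
    intro ω hω
    simp only [Set.mem_setOf_eq] at hω
    have hid : (n : ℝ) * ((1 / (n : ℝ)) * (∑ i, X i ω)) = ∑ i, X i ω := by
      field_simp
    rcases lt_abs.mp hω with h | h
    · left
      have := mul_lt_mul_of_pos_left h npos
      simp only [Set.mem_setOf_eq, hEu]
      nlinarith
    · right
      have := mul_lt_mul_of_pos_left h npos
      simp only [Set.mem_setOf_eq, hEl]
      nlinarith
  have hsplit : (ℙ {ω | t < |(1 / (n : ℝ)) * (∑ i, X i ω) - μ|}).toReal
      ≤ (ℙ Eu).toReal + (ℙ El).toReal := by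
    calc (ℙ {ω | t < |(1 / (n : ℝ)) * (∑ i, X i ω) - μ|}).toReal
        ≤ (ℙ (Eu ∪ El)).toReal :=
          ENNReal.toReal_mono (measure_ne_top _ _) (measure_mono hsub)
      _ ≤ (ℙ Eu + ℙ El).toReal :=
          ENNReal.toReal_mono (by finiteness) (measure_union_le _ _)
      _ = (ℙ Eu).toReal + (ℙ El).toReal :=
          ENNReal.toReal_add (measure_ne_top _ _) (measure_ne_top _ _)
  refine hsplit.trans ?_
  rcases le_or_gt μ (δ / (2 * Real.exp 1)) with hcase | hcase
  -- Case B : μ ≤ δ/(2e)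
  · have hμδ : μ < δ := by
      have : δ / (2 * Real.exp 1) < δ := by
        rw [div_lt_iff₀ (by positivity)]
        nlinarith
      linarith
    -- lower tail is a null event
    have hlow : (ℙ El).toReal = 0 := by
      have haeS : ∀ᵐ ω ∂ℙ, 0 ≤ ∑ i, X i ω := by
        have hall : ∀ᵐ ω ∂ℙ, ∀ i, X i ω ∈ Set.Icc (0 : ℝ) M := ae_all_iff.mpr hbdd
        filter_upwards [hall] with ω hω
        exact Finset.sum_nonneg (fun i _ => (hω i).1)
      have hnull : ℙ {ω | ¬ (0 ≤ ∑ i, X i ω)} = 0 := by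
        exact haeS
      have hsub2 : El ⊆ {ω | ¬ (0 ≤ ∑ i, X i ω)} := by
        intro ω hω
        simp only [Set.mem_setOf_eq, hEl] at hω ⊢
        intro h0
        have hneg : (n : ℝ) * (μ - t) < 0 := by
          apply mul_neg_of_pos_of_neg npos
          linarith
        linarith
      rw [measure_mono_null hsub2 hnull]
      simp
    -- upper tail via Chernoff with s = (1 + log 2)/M
    have hupsub : Eu ⊆ {ω | (n : ℝ) * δ ≤ ∑ i, X i ω} := by
      intro ω hω
      have hω' : (n : ℝ) * (μ + t) ≤ ∑ i, X i ω := hω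
      show (n : ℝ) * δ ≤ ∑ i, X i ω
      nlinarith
    set s : ℝ := (1 + Real.log 2) / M with hsdef
    have hs0 : 0 ≤ s := by positivity
    have hsM : s * M = 1 + Real.log 2 := by rw [hsdef]; field_simp
    have hesM : Real.exp (s * M) = 2 * Real.exp 1 := by
      rw [hsM, Real.exp_add, Real.exp_log (by norm_num : (0:ℝ) < 2)]
      ring
    have htail := MC_tail_upper hmeas hindep hM hbdd hμi hs0 ((n : ℝ) * δ)
    rw [hesM] at htail
    have hexp_le : -s * ((n : ℝ) * δ) + (n : ℝ) * ((2 * Real.exp 1 - 1) * μ / M) ≤ -L := by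
      have heq : -s * ((n : ℝ) * δ) + (n : ℝ) * ((2 * Real.exp 1 - 1) * μ / M)
          = ((n : ℝ) * ((2 * Real.exp 1 - 1) * μ) - (1 + Real.log 2) * ((n : ℝ) * δ)) / M := by
        rw [hsdef]; field_simp; ring
      rw [heq, div_le_iff₀ hM]
      have h1 : (n : ℝ) * (μ * (2 * Real.exp 1)) ≤ (n : ℝ) * δ := by
        have : μ * (2 * Real.exp 1) ≤ δ := by
          rw [← le_div_iff₀ (by positivity)]; exact hcase
        exact mul_le_mul_of_nonneg_left this npos.le
      have hnμ : 0 ≤ (n : ℝ) * μ := by positivity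
      nlinarith [hB, h1, hnμ]
    have hup : (ℙ Eu).toReal ≤ pf / 2 := by
      calc (ℙ Eu).toReal ≤ (ℙ {ω | (n : ℝ) * δ ≤ ∑ i, X i ω}).toReal :=
            ENNReal.toReal_mono (measure_ne_top _ _) (measure_mono hupsub)
        _ ≤ Real.exp (-s * ((n : ℝ) * δ) + (n : ℝ) * ((2 * Real.exp 1 - 1) * μ / M)) := htail
        _ ≤ Real.exp (-L) := Real.exp_le_exp.mpr hexp_le
        _ = pf / 2 := hexpL
    rw [hlow]
    linarith
  -- Case A : δ/(2e) < μ
  · have hμpos : 0 < μ := lt_trans (by positivity) hcase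
    have hLM : 3 * (L * M) ≤ (n : ℝ) * (ε ^ 2 * μ) := by
      have hδ2e : δ < 2 * Real.exp 1 * μ := by
        rw [div_lt_iff₀ (by positivity)] at hcase
        linarith [hcase]
      nlinarith [hA, mul_pos npos (mul_pos (pow_pos hε0 2) hδ), Real.exp_pos 1,
        mul_le_mul_of_nonneg_left hδ2e.le (by positivity : (0:ℝ) ≤ (n:ℝ) * ε ^ 2)]
    -- upper tail with s = log(1+ε)/M
    have hup : (ℙ Eu).toReal ≤ pf / 2 := by
      have hupsub : Eu ⊆ {ω | (n : ℝ) * ((1 + ε) * μ) ≤ ∑ i, X i ω} := by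
        intro ω hω
        have hω' : (n : ℝ) * (μ + t) ≤ ∑ i, X i ω := hω
        show (n : ℝ) * ((1 + ε) * μ) ≤ ∑ i, X i ω
        nlinarith
      set s : ℝ := Real.log (1 + ε) / M with hsdef
      have hs0 : 0 ≤ s := by
        apply div_nonneg _ hM.le
        exact Real.log_nonneg (by linarith)
      have hsM : s * M = Real.log (1 + ε) := by rw [hsdef]; field_simp
      have hesM : Real.exp (s * M) = 1 + ε := by
        rw [hsM, Real.exp_log (by linarith)]
      have htail := MC_tail_upper hmeas hindep hM hbdd hμi hs0 ((n : ℝ) * ((1 + ε) * μ))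
      rw [hesM] at htail
      have hexp_le : -s * ((n : ℝ) * ((1 + ε) * μ)) + (n : ℝ) * ((1 + ε - 1) * μ / M) ≤ -L := by
        have heq : -s * ((n : ℝ) * ((1 + ε) * μ)) + (n : ℝ) * ((1 + ε - 1) * μ / M)
            = ((n : ℝ) * μ * (ε - (1 + ε) * Real.log (1 + ε))) / M := by
          rw [hsdef]; field_simp; ring
        rw [heq, div_le_iff₀ hM]
        have hkey := MC_ineq1 ε hε0.le hε1.le
        have hnμ : (0:ℝ) ≤ (n : ℝ) * μ := by positivity
        nlinarith [mul_le_mul_of_nonneg_left hkey hnμ]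
      calc (ℙ Eu).toReal ≤ (ℙ {ω | (n : ℝ) * ((1 + ε) * μ) ≤ ∑ i, X i ω}).toReal :=
            ENNReal.toReal_mono (measure_ne_top _ _) (measure_mono hupsub)
        _ ≤ Real.exp (-s * ((n : ℝ) * ((1 + ε) * μ)) + (n : ℝ) * ((1 + ε - 1) * μ / M)) := htail
        _ ≤ Real.exp (-L) := Real.exp_le_exp.mpr hexp_le
        _ = pf / 2 := hexpL
    -- lower tail with s = log(1-ε)/M
    have hlow : (ℙ El).toReal ≤ pf / 2 := by
      have hlowsub : El ⊆ {ω | ∑ i, X i ω ≤ (n : ℝ) * ((1 - ε) * μ)} := by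
        intro ω hω
        have hω' : ∑ i, X i ω ≤ (n : ℝ) * (μ - t) := hω
        show ∑ i, X i ω ≤ (n : ℝ) * ((1 - ε) * μ)
        nlinarith
      set s : ℝ := Real.log (1 - ε) / M with hsdef
      have hs0 : s ≤ 0 := by
        apply div_nonpos_of_nonpos_of_nonneg _ hM.le
        exact Real.log_nonpos (by linarith) (by linarith)
      have hsM : s * M = Real.log (1 - ε) := by rw [hsdef]; field_simp
      have hesM : Real.exp (s * M) = 1 - ε := by
        rw [hsM, Real.exp_log (by linarith)]
      have htail := MC_tail_lower hmeas hindep hM hbdd hμi hs0 ((n : ℝ) * ((1 - ε) * μ))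
      rw [hesM] at htail
      have hexp_le : -s * ((n : ℝ) * ((1 - ε) * μ)) + (n : ℝ) * ((1 - ε - 1) * μ / M) ≤ -L := by
        have heq : -s * ((n : ℝ) * ((1 - ε) * μ)) + (n : ℝ) * ((1 - ε - 1) * μ / M)
            = -((n : ℝ) * μ * (ε + (1 - ε) * Real.log (1 - ε))) / M := by
          rw [hsdef]; field_simp; ring
        rw [heq, div_le_iff₀ hM]
        have hkey := MC_ineq2 ε hε0.le hε1
        have hnμ : (0:ℝ) ≤ (n : ℝ) * μ := by positivity
        nlinarith [mul_le_mul_of_nonneg_left hkey hnμ]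
      calc (ℙ El).toReal ≤ (ℙ {ω | ∑ i, X i ω ≤ (n : ℝ) * ((1 - ε) * μ)}).toReal :=
            ENNReal.toReal_mono (measure_ne_top _ _) (measure_mono hlowsub)
        _ ≤ Real.exp (-s * ((n : ℝ) * ((1 - ε) * μ)) + (n : ℝ) * ((1 - ε - 1) * μ / M)) := htail
        _ ≤ Real.exp (-L) := Real.exp_le_exp.mpr hexp_le
        _ = pf / 2 := hexpL
    linarith
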